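/- arXiv:1905.05005 — 2 statements merged into one kernel-verified Lean document; each statement's English description precedes it below -/
import Mathlib

section
/- Let 1 ≤ p < ∞, 0 < α < n, and V ∈ L^p_loc(ℝⁿ) with η_{α,p}V(r) < ∞ for all r > 0. Then the Stummel p-modulus satisfies the doubling condition: there is a constant C = C(n, α) such that η_{α,p}V(2r) ≤ C · η_{α,p}V(r) for all r > 0. -/
open MeasureTheory Metric
open scoped ENNReal NNReal

lemma kernel_lintegral_lt_top (n : ℕ) (α : ℝ) (hα0 : 0 < α) (hαn : α < n) {r : ℝ} (hr : 0 < r) :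
    ∫⁻ w in ball (0 : EuclideanSpace ℝ (Fin n)) r,
      ENNReal.ofReal (‖w‖ ^ (α - (n : ℝ))) < ⊤ := by
  have hn : 0 < n := by exact_mod_cast hα0.trans hαn
  haveI : NeZero n := ⟨hn.ne'⟩
  set E := EuclideanSpace ℝ (Fin n)
  set κ : E → ℝ≥0∞ := fun w => ENNReal.ofReal (‖w‖ ^ (α - (n : ℝ))) with hκ
  have hκmeas : Measurable κ := (measurable_norm.pow measurable_const).ennreal_ofReal
  set ν : Measure E := volume.withDensity κ with hν
  have hνap : ∀ s : Set E, MeasurableSet s → ν s = ∫⁻ w in s, κ w := fun s hs =>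
    withDensity_apply κ hs
  -- shells
  set t : ℝ := 2⁻¹ with ht
  have ht0 : (0:ℝ) < t := by norm_num
  have ht1 : t < 1 := by norm_num
  set S : ℕ → Set E := fun k => {w : E | r * t ^ (k+1) ≤ ‖w‖} ∩ ball 0 (r * t ^ k) with hS
  have hSmeas : ∀ k, MeasurableSet (S k) :=
    fun k => (measurableSet_le measurable_const measurable_norm).inter measurableSet_ball
  have hcover : ball (0:E) r ⊆ {0} ∪ ⋃ k, S k := by
    intro w hw
    rcases eq_or_ne w 0 with h | h
    · exact Or.inl (by simp [h])
    · right
      have hw0 : 0 < ‖w‖ := norm_pos_iff.2 h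
      obtain ⟨m, hm⟩ : ∃ m : ℕ, t ^ m < ‖w‖ / r :=
        exists_pow_lt_of_lt_one (by positivity) ht1
      have hm' : r * t ^ (m+1) ≤ ‖w‖ := by
        have : r * t ^ m < ‖w‖ := by
          rw [mul_comm]
          exact (lt_div_iff₀ hr).1 hm
        have h2 : t ^ (m+1) ≤ t ^ m := pow_le_pow_of_le_one ht0.le ht1.le (Nat.le_succ m)
        nlinarith
      have hP : ∃ m : ℕ, r * t ^ (m+1) ≤ ‖w‖ := ⟨m, hm'⟩
      set k := Nat.find hP with hk
      have hk1 : r * t ^ (k+1) ≤ ‖w‖ := Nat.find_spec hP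
      refine Set.mem_iUnion.2 ⟨k, ⟨hk1, ?_⟩⟩
      rw [mem_ball_zero_iff]
      rcases Nat.eq_zero_or_pos k with h0 | h0
      · rw [h0]
        simpa using mem_ball_zero_iff.1 hw
      · have := Nat.find_min hP (m := k - 1) (by omega)
        push_neg at this
        have hkk : k - 1 + 1 = k := by omega
        rwa [hkk] at this
  have hshell : ∀ k : ℕ, ν (S k) ≤
      ENNReal.ofReal ((r * t ^ (k+1)) ^ (α - (n:ℝ))) *
        (ENNReal.ofReal ((r * t ^ k) ^ n) * volume (ball (0:E) 1)) := by
    intro k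
    have hrt : 0 < r * t ^ (k+1) := by positivity
    rw [hνap _ (hSmeas k)]
    calc ∫⁻ w in S k, κ w ≤ ∫⁻ _ in S k, ENNReal.ofReal ((r * t ^ (k+1)) ^ (α - (n:ℝ))) := by
          refine setLIntegral_mono measurable_const fun w hw => ?_
          refine ENNReal.ofReal_le_ofReal ?_
          have h1 : r * t ^ (k+1) ≤ ‖w‖ := hw.1
          have hwpos : 0 < ‖w‖ := lt_of_lt_of_le hrt h1
          rw [show α - (n:ℝ) = -((n:ℝ) - α) by ring, Real.rpow_neg hwpos.le,
            Real.rpow_neg hrt.le]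
          exact inv_anti₀ (Real.rpow_pos_of_pos hrt _)
            (Real.rpow_le_rpow hrt.le h1 (by linarith [hαn]))
      _ = ENNReal.ofReal ((r * t ^ (k+1)) ^ (α - (n:ℝ))) * volume (S k) := by
          rw [setLIntegral_const]
      _ ≤ _ := by
          refine mul_le_mul_right ?_ _
          have : volume (S k) ≤ volume (ball (0:E) (r * t ^ k)) :=
            measure_mono Set.inter_subset_right
          refine this.trans ?_
          rw [Measure.addHaar_ball volume 0 (by positivity : (0:ℝ) ≤ r * t ^ k),
            finrank_euclideanSpace_fin]
  have hz0 : ν ({0} : Set E) = 0 :=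
    (withDensity_absolutelyContinuous volume κ) (measure_singleton 0)
  set B := volume (ball (0:E) 1) with hB
  set D : ℝ≥0∞ := ENNReal.ofReal (r ^ α * t ^ (α - (n:ℝ))) * B with hD
  set x : ℝ≥0∞ := ENNReal.ofReal (t ^ α) with hx
  have hid : ∀ k : ℕ, ((r * t ^ (k+1)) ^ (α - (n:ℝ))) * ((r * t ^ k) ^ (n:ℕ)) =
      (r ^ α * t ^ (α - (n:ℝ))) * (t ^ α) ^ k := by
    intro k
    have h1 : (0:ℝ) < r * t ^ (k+1) := by positivity
    have h2 : (0:ℝ) < r * t ^ k := by positivity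
    have hlog : ∀ j : ℕ, Real.log (r * t ^ j) = Real.log r + j * Real.log t := by
      intro j; rw [Real.log_mul hr.ne' (by positivity), Real.log_pow]
    rw [← Real.rpow_natCast (r * t ^ k) n, ← Real.rpow_natCast (t ^ α) k,
      Real.rpow_def_of_pos h1, Real.rpow_def_of_pos h2,
      Real.rpow_def_of_pos (Real.rpow_pos_of_pos ht0 α),
      Real.rpow_def_of_pos hr, Real.rpow_def_of_pos ht0,
      Real.log_rpow ht0, hlog (k+1), hlog k, ← Real.exp_add, ← Real.exp_add, ← Real.exp_add]
    congr 1
    push_cast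
    ring
  have hxlt : x < 1 := by
    rw [hx]
    exact ENNReal.ofReal_lt_one.2 (Real.rpow_lt_one ht0.le ht1 hα0)
  have hterm : ∀ k : ℕ, ν (S k) ≤ D * x ^ k := by
    intro k
    refine (hshell k).trans ?_
    have hc : (0:ℝ) ≤ (r * t ^ (k+1)) ^ (α - (n:ℝ)) := Real.rpow_nonneg (by positivity) _
    have hb : (0:ℝ) ≤ (r * t ^ k) ^ (n:ℕ) := by positivity
    calc ENNReal.ofReal ((r * t ^ (k+1)) ^ (α - (n:ℝ))) *
          (ENNReal.ofReal ((r * t ^ k) ^ (n:ℕ)) * B)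
        = ENNReal.ofReal (((r * t ^ (k+1)) ^ (α - (n:ℝ))) * ((r * t ^ k) ^ (n:ℕ))) * B := by
          rw [ENNReal.ofReal_mul hc]; ring
      _ = ENNReal.ofReal ((r ^ α * t ^ (α - (n:ℝ))) * (t ^ α) ^ k) * B := by rw [hid k]
      _ = D * x ^ k := by
          rw [ENNReal.ofReal_mul (by positivity), ENNReal.ofReal_pow (by positivity)]
          ring
      _ ≤ D * x ^ k := le_rfl
  have hsum : ν (ball (0:E) r) ≤ D * (1 - x)⁻¹ := by
    calc ν (ball (0:E) r) ≤ ν ({0} ∪ ⋃ k, S k) := measure_mono hcover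
      _ ≤ ν ({0} : Set E) + ν (⋃ k, S k) := measure_union_le _ _
      _ = ν (⋃ k, S k) := by rw [hz0, zero_add]
      _ ≤ ∑' k, ν (S k) := measure_iUnion_le S
      _ ≤ ∑' k, D * x ^ k := ENNReal.tsum_le_tsum hterm
      _ = D * ∑' k, x ^ k := ENNReal.tsum_mul_left
      _ = D * (1 - x)⁻¹ := by rw [ENNReal.tsum_geometric]
  have hDlt : D < ⊤ := ENNReal.mul_lt_top ENNReal.ofReal_lt_top measure_ball_lt_top
  have h1x : ((1:ℝ≥0∞) - x)⁻¹ < ⊤ := by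
    rw [lt_top_iff_ne_top, ENNReal.inv_ne_top]
    exact fun h => absurd (tsub_eq_zero_iff_le.1 h) (not_le.2 hxlt)
  have : ν (ball (0:E) r) < ⊤ := lt_of_le_of_lt hsum (ENNReal.mul_lt_top hDlt h1x)
  rwa [hνap _ measurableSet_ball] at this


set_option maxHeartbeats 2000000 in
/-- doubling condition for the Stummel p-modulus
η_{α,p}V(r) = sup_x (∫_{|x-y|<r} |V y|^p / |x-y|^{n-α} dy)^{1/p}. -/
theorem stmt_1 (n : ℕ) (p α : ℝ) (hp : 1 ≤ p) (hα0 : 0 < α) (hαn : α < n)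
    (V : EuclideanSpace ℝ (Fin n) → ℝ)
    (hVloc : LocallyIntegrable (fun y => |V y| ^ p)
      (volume : Measure (EuclideanSpace ℝ (Fin n))))
    (η : ℝ → ℝ)
    (hη : ∀ r : ℝ, η r = ⨆ x : EuclideanSpace ℝ (Fin n),
      (∫ y in ball x r, |V y| ^ p / ‖x - y‖ ^ ((n : ℝ) - α)) ^ (1 / p))
    (hfin : ∀ r : ℝ, 0 < r → BddAbove (Set.range fun x : EuclideanSpace ℝ (Fin n) =>
      (∫ y in ball x r, |V y| ^ p / ‖x - y‖ ^ ((n : ℝ) - α)) ^ (1 / p))) :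
    ∃ C : ℝ, 0 < C ∧ ∀ r : ℝ, 0 < r → η (2 * r) ≤ C * η r := by
  classical
  have hn : 0 < n := by exact_mod_cast hα0.trans hαn
  haveI : NeZero n := ⟨hn.ne'⟩
  have hp0 : (0:ℝ) < p := lt_of_lt_of_le one_pos hp
  -- measurable representative of ENNReal.ofReal (|V ·| ^ p)
  have hVae : AEMeasurable (fun y => ENNReal.ofReal (|V y| ^ p))
      (volume : Measure (EuclideanSpace ℝ (Fin n))) :=
    hVloc.aestronglyMeasurable.aemeasurable.ennreal_ofReal
  obtain ⟨v, hv_meas, hv_ae⟩ :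
      ∃ v : EuclideanSpace ℝ (Fin n) → ℝ≥0∞, Measurable v ∧
        (fun y => ENNReal.ofReal (|V y| ^ p)) =ᵐ[volume] v :=
    ⟨hVae.mk _, hVae.measurable_mk, hVae.ae_eq_mk⟩
  set Q : EuclideanSpace ℝ (Fin n) → EuclideanSpace ℝ (Fin n) → ℝ≥0∞ :=
    fun x y => v y * ENNReal.ofReal (‖x - y‖ ^ (α - (n:ℝ))) with hQ
  have hQmeas : ∀ x, Measurable (Q x) := fun x =>
    hv_meas.mul (((measurable_const.sub measurable_id).norm.pow measurable_const).ennreal_ofReal)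
  set ν : EuclideanSpace ℝ (Fin n) → Measure (EuclideanSpace ℝ (Fin n)) :=
    fun x => volume.withDensity (Q x) with hν
  have hνap : ∀ (x : EuclideanSpace ℝ (Fin n)) {s : Set (EuclideanSpace ℝ (Fin n))},
      MeasurableSet s → ν x s = ∫⁻ y in s, Q x y := fun x s hs => withDensity_apply _ hs
  have hsing : ∀ x z : EuclideanSpace ℝ (Fin n), ν x {z} = 0 := fun x z =>
    (withDensity_absolutelyContinuous volume (Q x)) (measure_singleton z)
  -- the real integrand equals a.e. the density
  have hIv : ∀ (x : EuclideanSpace ℝ (Fin n)) (s : ℝ),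
      (∫ y in ball x s, |V y| ^ p / ‖x - y‖ ^ ((n:ℝ) - α)) = (ν x (ball x s)).toReal := by
    intro x s
    have h2 : Measurable fun y : EuclideanSpace ℝ (Fin n) => ‖x - y‖ ^ ((n:ℝ) - α) :=
      (measurable_const.sub measurable_id).norm.pow measurable_const
    have haesm : AEStronglyMeasurable
        (fun y => |V y| ^ p / ‖x - y‖ ^ ((n:ℝ) - α)) (volume.restrict (ball x s)) :=
      ((hVloc.aestronglyMeasurable.aemeasurable.restrict).div
        h2.aemeasurable.restrict).aestronglyMeasurable
    rw [integral_eq_lintegral_of_nonneg_ae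
        (ae_of_all _ fun y => div_nonneg (Real.rpow_nonneg (abs_nonneg _) _)
          (Real.rpow_nonneg (norm_nonneg _) _)) haesm]
    congr 1
    rw [hνap x measurableSet_ball]
    refine lintegral_congr_ae (ae_restrict_of_ae ?_)
    filter_upwards [hv_ae] with y hy
    have hid : |V y| ^ p / ‖x - y‖ ^ ((n:ℝ) - α) = |V y| ^ p * ‖x - y‖ ^ (α - (n:ℝ)) := by
      rw [show α - (n:ℝ) = -((n:ℝ) - α) by ring, Real.rpow_neg (norm_nonneg _), div_eq_mul_inv]
    simp only [hid, ENNReal.ofReal_mul (Real.rpow_nonneg (abs_nonneg _) p), hy]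
    rfl
  -- kernel monotonicity
  have kmono : ∀ {a b : ℝ}, 0 < a → a ≤ b → b ^ (α - (n:ℝ)) ≤ a ^ (α - (n:ℝ)) := by
    intro a b ha hab
    rw [show α - (n:ℝ) = -((n:ℝ) - α) by ring, Real.rpow_neg ha.le,
      Real.rpow_neg (ha.trans_le hab).le]
    exact inv_anti₀ (Real.rpow_pos_of_pos ha _)
      (Real.rpow_le_rpow ha.le hab (by linarith))
  -- covering of the double ball
  obtain ⟨T, hT⟩ : ∃ T : Finset (EuclideanSpace ℝ (Fin n)),
      closedBall (0 : EuclideanSpace ℝ (Fin n)) 2 ⊆ ⋃ c ∈ T, ball c (1/2) :=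
    (isCompact_closedBall (0 : EuclideanSpace ℝ (Fin n)) 2).elim_finite_subcover
      (fun c : EuclideanSpace ℝ (Fin n) => ball c (1/2)) (fun _ => isOpen_ball)
      (fun w _ => Set.mem_iUnion.2 ⟨w, mem_ball_self (by norm_num)⟩)
  have hcov : ∀ (x : EuclideanSpace ℝ (Fin n)) (r : ℝ), 0 < r →
      ball x (2*r) ⊆ ⋃ c ∈ T, ball (x + r • c) (r/2) := by
    intro x r hr y hy
    have hyx : ‖y - x‖ < 2*r := by
      rw [← dist_eq_norm]; exact mem_ball.mp hy
    have hw : r⁻¹ • (y - x) ∈ closedBall (0 : EuclideanSpace ℝ (Fin n)) 2 := by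
      rw [mem_closedBall_zero_iff, norm_smul, norm_inv, Real.norm_eq_abs, abs_of_pos hr]
      rw [inv_mul_le_iff₀ hr]
      linarith
    obtain ⟨c, hcT, hc⟩ := Set.mem_iUnion₂.1 (hT hw)
    refine Set.mem_biUnion hcT ?_
    rw [mem_ball, dist_eq_norm]
    have h1 : y - (x + r • c) = r • (r⁻¹ • (y - x) - c) := by
      rw [smul_sub, smul_smul, mul_inv_cancel₀ hr.ne', one_smul]
      abel
    rw [h1, norm_smul, Real.norm_eq_abs, abs_of_pos hr]
    have : ‖r⁻¹ • (y - x) - c‖ < 1/2 := by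
      rw [← dist_eq_norm]; exact mem_ball.mp hc
    nlinarith
  -- cross comparison on the difference set
  have hdiff : ∀ (x z' : EuclideanSpace ℝ (Fin n)) (r : ℝ), 0 < r →
      ν x (ball z' (r/2) \ ball x r) ≤ ν z' (ball z' r) := by
    intro x z' r hr
    have h1 : ν x (ball z' (r/2) \ ball x r) = ν x ((ball z' (r/2) \ ball x r) \ {z'}) :=
      (measure_diff_null (hsing x z')).symm
    rw [h1, hνap x ((measurableSet_ball.diff measurableSet_ball).diff
      (measurableSet_singleton z')), hνap z' measurableSet_ball]
    refine le_trans (setLIntegral_mono (hQmeas z') ?_) (lintegral_mono_set ?_)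
    · rintro y ⟨⟨hy1, hy2⟩, hy3⟩
      have hzy : 0 < ‖z' - y‖ := by
        rw [norm_pos_iff, sub_ne_zero]
        exact fun h => hy3 (by simp [← h])
      have hxy : ‖z' - y‖ ≤ ‖x - y‖ := by
        have h4 : ‖z' - y‖ < r/2 := by rw [← dist_eq_norm]; exact mem_ball'.mp hy1
        have h5 : r ≤ ‖x - y‖ := by
          rw [← dist_eq_norm]
          by_contra hlt
          exact hy2 (mem_ball'.mpr (lt_of_not_ge hlt))
        linarith
      exact mul_le_mul_right (ENNReal.ofReal_le_ofReal (kmono hzy hxy)) _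
    · intro y hy
      exact ball_subset_ball (by linarith) hy.1.1
  -- doubling at the level of ν
  have hdouble : ∀ (x : EuclideanSpace ℝ (Fin n)) (r : ℝ), 0 < r →
      ν x (ball x (2*r)) ≤
        ∑ c ∈ T, (ν x (ball x r) + ν (x + r • c) (ball (x + r • c) r)) := by
    intro x r hr
    calc ν x (ball x (2*r)) ≤ ν x (⋃ c ∈ T, ball (x + r • c) (r/2)) :=
          measure_mono (hcov x r hr)
      _ ≤ ∑ c ∈ T, ν x (ball (x + r • c) (r/2)) := measure_biUnion_finset_le T _
      _ ≤ ∑ c ∈ T, (ν x (ball x r) + ν (x + r • c) (ball (x + r • c) r)) := by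
          refine Finset.sum_le_sum fun c _ => ?_
          calc ν x (ball (x + r • c) (r/2)) ≤
              ν x (ball (x + r • c) (r/2) ∩ ball x r) +
                ν x (ball (x + r • c) (r/2) \ ball x r) := measure_le_inter_add_diff _ _ _
            _ ≤ ν x (ball x r) + ν (x + r • c) (ball (x + r • c) r) :=
                add_le_add (measure_mono Set.inter_subset_right) (hdiff x _ r hr)
  refine ⟨2 * (T.card : ℝ) + 1,
    by have := Nat.cast_nonneg (α := ℝ) T.card; linarith, fun r hr => ?_⟩
  have hηle : ∀ x : EuclideanSpace ℝ (Fin n),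
      (∫ y in ball x r, |V y| ^ p / ‖x - y‖ ^ ((n:ℝ) - α)) ^ (1/p) ≤ η r := by
    intro x; rw [hη r]; exact le_ciSup (hfin r hr) x
  have hInonneg : ∀ (x : EuclideanSpace ℝ (Fin n)) (s : ℝ),
      0 ≤ ∫ y in ball x s, |V y| ^ p / ‖x - y‖ ^ ((n:ℝ) - α) :=
    fun x s => integral_nonneg fun y => by positivity
  have hη0 : 0 ≤ η r := le_trans (Real.rpow_nonneg (hInonneg 0 r) _) (hηle 0)
  have hppow : ∀ a : ℝ, 0 ≤ a → (a ^ (1/p : ℝ)) ^ (p : ℝ) = a := by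
    intro a ha
    rw [← Real.rpow_mul ha, one_div_mul_cancel hp0.ne', Real.rpow_one]
  have hqpow : ∀ a : ℝ, 0 ≤ a → (a ^ (p : ℝ)) ^ (1/p : ℝ) = a := by
    intro a ha
    rw [← Real.rpow_mul ha, mul_one_div_cancel hp0.ne', Real.rpow_one]
  have hIle : ∀ x : EuclideanSpace ℝ (Fin n),
      (∫ y in ball x r, |V y| ^ p / ‖x - y‖ ^ ((n:ℝ) - α)) ≤ (η r) ^ (p : ℝ) := by
    intro x
    have h1 := Real.rpow_le_rpow (Real.rpow_nonneg (hInonneg x r) _) (hηle x) hp0.le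
    rwa [hppow _ (hInonneg x r)] at h1
  by_cases hA : ∀ z : EuclideanSpace ℝ (Fin n), ν z (ball z r) ≠ ⊤
  · -- Case A : all integrals finite
    have hbnd : ∀ z : EuclideanSpace ℝ (Fin n),
        ν z (ball z r) ≤ ENNReal.ofReal ((η r) ^ (p:ℝ)) := by
      intro z
      rw [ENNReal.le_ofReal_iff_toReal_le (hA z) (Real.rpow_nonneg hη0 _), ← hIv z r]
      exact hIle z
    have hC2 : ∀ x : EuclideanSpace ℝ (Fin n),
        ν x (ball x (2*r)) ≤ ENNReal.ofReal ((2 * (T.card:ℝ) + 1) * (η r) ^ (p:ℝ)) := by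
      intro x
      refine (hdouble x r hr).trans ?_
      have hstep : ∀ c ∈ T, ν x (ball x r) + ν (x + r • c) (ball (x + r • c) r) ≤
          ENNReal.ofReal ((η r)^(p:ℝ)) + ENNReal.ofReal ((η r)^(p:ℝ)) :=
        fun c _ => add_le_add (hbnd x) (hbnd _)
      refine (Finset.sum_le_sum hstep).trans ?_
      rw [Finset.sum_const, nsmul_eq_mul]
      have he : (0:ℝ) ≤ (η r) ^ (p:ℝ) := Real.rpow_nonneg hη0 _
      calc (T.card : ℝ≥0∞) * (ENNReal.ofReal ((η r)^(p:ℝ)) + ENNReal.ofReal ((η r)^(p:ℝ)))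
          = ENNReal.ofReal (T.card : ℝ) * ENNReal.ofReal (2 * (η r)^(p:ℝ)) := by
            rw [← ENNReal.ofReal_add he he, ENNReal.ofReal_natCast, two_mul]
        _ = ENNReal.ofReal ((T.card : ℝ) * (2 * (η r)^(p:ℝ))) := by
            rw [ENNReal.ofReal_mul (Nat.cast_nonneg _)]
        _ ≤ ENNReal.ofReal ((2 * (T.card:ℝ) + 1) * (η r) ^ (p:ℝ)) := by
            refine ENNReal.ofReal_le_ofReal ?_
            nlinarith [Nat.cast_nonneg (α := ℝ) T.card]
    rw [hη (2*r)]
    refine ciSup_le fun x => ?_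
    have h1 : (∫ y in ball x (2*r), |V y| ^ p / ‖x - y‖ ^ ((n:ℝ) - α)) ≤
        (2 * (T.card:ℝ) + 1) * (η r) ^ (p:ℝ) := by
      rw [hIv x (2*r)]
      have hc0' : (0:ℝ) ≤ (2 * (T.card:ℝ) + 1) * (η r) ^ (p:ℝ) :=
        mul_nonneg (by have := Nat.cast_nonneg (α := ℝ) T.card; linarith)
          (Real.rpow_nonneg hη0 _)
      exact ENNReal.toReal_le_of_le_ofReal hc0' (hC2 x)
    have h2 := Real.rpow_le_rpow (hInonneg x (2*r)) h1 (one_div_nonneg.2 hp0.le)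
    refine h2.trans ?_
    have hc0 : (0:ℝ) ≤ 2*(T.card:ℝ)+1 := by
      have := Nat.cast_nonneg (α := ℝ) T.card; linarith
    rw [Real.mul_rpow hc0 (Real.rpow_nonneg hη0 _), hqpow _ hη0]
    have h3 : (2*(T.card:ℝ)+1) ^ (1/p : ℝ) ≤ 2*(T.card:ℝ)+1 := by
      have h4 : (1:ℝ) ≤ 2*(T.card:ℝ)+1 := by
        have := Nat.cast_nonneg (α := ℝ) T.card; linarith
      calc (2*(T.card:ℝ)+1)^(1/p:ℝ) ≤ (2*(T.card:ℝ)+1)^(1:ℝ) :=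
            Real.rpow_le_rpow_of_exponent_le h4 (by rw [div_le_one hp0]; exact hp)
        _ = 2*(T.card:ℝ)+1 := Real.rpow_one _
    exact mul_le_mul_of_nonneg_right h3 hη0
  · -- Case B : some center has infinite mass; contradict hfin
    exfalso
    push_neg at hA
    obtain ⟨z, hz⟩ := hA
    obtain ⟨M, hM⟩ := hfin r hr
    have hMb : ∀ x : EuclideanSpace ℝ (Fin n),
        (∫ y in ball x r, |V y| ^ p / ‖x - y‖ ^ ((n:ℝ) - α)) ^ (1/p) ≤ M :=
      fun x => hM ⟨x, rfl⟩
    set M₀ : ℝ := max M 0 with hM₀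
    have hvfin : ∀ (z' : EuclideanSpace ℝ (Fin n)) (s : ℝ),
        ∫⁻ y in closedBall z' s, v y < ⊤ := by
      intro z' s
      have hint := (hVloc.integrableOn_isCompact (isCompact_closedBall z' s)).hasFiniteIntegral
      have h1 : ∫⁻ y in closedBall z' s, v y
          = ∫⁻ y in closedBall z' s, (‖|V y| ^ p‖₊ : ℝ≥0∞) := by
        refine lintegral_congr_ae (ae_restrict_of_ae ?_)
        filter_upwards [hv_ae] with y hy
        rw [← hy, ← Real.enorm_eq_ofReal (Real.rpow_nonneg (abs_nonneg _) _), enorm_eq_nnnorm]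
      rw [h1]
      exact hint
    have hann : ν z (ball z r \ ball z (r/2)) < ⊤ := by
      rw [hνap z (measurableSet_ball.diff measurableSet_ball)]
      calc ∫⁻ y in ball z r \ ball z (r/2), Q z y
          ≤ ∫⁻ y in ball z r \ ball z (r/2), v y * ENNReal.ofReal ((r/2) ^ (α-(n:ℝ))) := by
            refine setLIntegral_mono (hv_meas.mul measurable_const) fun y hy => ?_
            refine mul_le_mul_right (ENNReal.ofReal_le_ofReal (kmono (by positivity) ?_)) _
            have h5 : ¬ dist y z < r/2 := fun h => hy.2 (mem_ball.mpr h)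
            rw [not_lt] at h5
            have e1 : ‖z - y‖ = dist y z := by rw [dist_comm, dist_eq_norm]
            linarith
        _ = (∫⁻ y in ball z r \ ball z (r/2), v y) * ENNReal.ofReal ((r/2)^(α-(n:ℝ))) :=
            lintegral_mul_const _ hv_meas
        _ ≤ (∫⁻ y in closedBall z r, v y) * ENNReal.ofReal ((r/2)^(α-(n:ℝ))) :=
            mul_le_mul_left
              (lintegral_mono_set fun y hy => ball_subset_closedBall hy.1) _
        _ < ⊤ := ENNReal.mul_lt_top (hvfin z r) ENNReal.ofReal_lt_top
    have hhalf : ν z (ball z (r/2)) = ⊤ := by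
      by_contra h
      have hsplit : ν z (ball z r) ≤ ν z (ball z (r/2)) + ν z (ball z r \ ball z (r/2)) := by
        refine (measure_mono ?_).trans (measure_union_le _ _)
        intro y hy
        by_cases h2 : y ∈ ball z (r/2)
        · exact Or.inl h2
        · exact Or.inr ⟨hy, h2⟩
      rw [hz] at hsplit
      exact absurd (lt_of_le_of_lt hsplit
        (ENNReal.add_lt_top.2 ⟨lt_top_iff_ne_top.2 h, hann⟩)) (lt_irrefl ⊤)
    set S : ℕ → Set (EuclideanSpace ℝ (Fin n)) :=
      fun k => ball z (r/2) \ closedBall z (r / (2*((k:ℝ)+2))) with hSdef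
    have hSmeas : ∀ k, MeasurableSet (S k) :=
      fun k => measurableSet_ball.diff measurableSet_closedBall
    have hSmono : Monotone S := by
      intro k l hkl
      refine Set.diff_subset_diff_right (closedBall_subset_closedBall ?_)
      have : (0:ℝ) < 2*((k:ℝ)+2) := by positivity
      refine div_le_div_of_nonneg_left hr.le this ?_
      have : (k:ℝ) ≤ (l:ℝ) := Nat.cast_le.2 hkl
      linarith
    have hSunion : (⋃ k, S k) = ball z (r/2) \ {z} := by
      ext y
      constructor
      · rintro hy
        obtain ⟨k, hk1, hk2⟩ := Set.mem_iUnion.1 hy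
        refine ⟨hk1, fun h => hk2 ?_⟩
        rw [Set.mem_singleton_iff] at h
        rw [h, mem_closedBall, dist_self]
        positivity
      · rintro ⟨hy1, hy2⟩
        have hd : 0 < dist y z := dist_pos.2 fun h => hy2 (Set.mem_singleton_iff.2 h)
        obtain ⟨k, hk⟩ := exists_nat_gt (r / (2 * dist y z))
        refine Set.mem_iUnion.2 ⟨k, hy1, ?_⟩
        intro hc
        rw [mem_closedBall] at hc
        have h6 : r / (2 * dist y z) < k := hk
        have h7 : r < (k:ℝ) * (2 * dist y z) := by
          rwa [div_lt_iff₀ (by positivity)] at h6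
        have h8 : r / (2*((k:ℝ)+2)) < dist y z := by
          rw [div_lt_iff₀ (by positivity)]
          nlinarith [hd]
        linarith
    have hSsup : (⨆ k, ν z (S k)) = ⊤ := by
      rw [← (hSmono.directed_le).measure_iUnion, hSunion, measure_diff_null (hsing z z)]
      exact hhalf
    set c2 : ℝ≥0∞ := ENNReal.ofReal (2 ^ (α - (n:ℝ))) with hc2
    have hc2pos : c2 ≠ 0 := by
      rw [hc2, ne_eq, ENNReal.ofReal_eq_zero, not_le]
      exact Real.rpow_pos_of_pos two_pos _
    have hc2top : c2 ≠ ⊤ := ENNReal.ofReal_ne_top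
    set Breal : ℝ := 2 ^ ((n:ℝ) - α) * (M₀ + 1) ^ (p:ℝ) with hBreal
    obtain ⟨k, hk⟩ : ∃ k, ENNReal.ofReal Breal < ν z (S k) := by
      refine lt_iSup_iff.1 ?_
      rw [hSsup]
      exact ENNReal.ofReal_lt_top
    set δ : ℝ := r / (2*((k:ℝ)+2)) with hδ
    have hδ0 : 0 < δ := by positivity
    have hδ4 : δ ≤ r/4 := by
      rw [hδ]
      refine div_le_div_of_nonneg_left hr.le (by norm_num) ?_
      have : (0:ℝ) ≤ (k:ℝ) := Nat.cast_nonneg k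
      linarith
    have hlow : ∀ x ∈ ball z δ, c2 * ν z (S k) ≤ ν x (ball x r) := by
      intro x hx
      have hxz : dist x z < δ := mem_ball.mp hx
      have hsub : S k ⊆ ball x r := by
        intro y hy
        have h1 : dist y z < r/2 := mem_ball.mp hy.1
        rw [mem_ball]
        calc dist y x ≤ dist y z + dist z x := dist_triangle _ _ _
          _ < r/2 + δ := by rw [dist_comm z x]; exact add_lt_add h1 hxz
          _ ≤ r := by linarith
      refine le_trans ?_ (measure_mono hsub)
      rw [hνap x (hSmeas k), hνap z (hSmeas k), ← lintegral_const_mul c2 (hQmeas z)]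
      refine setLIntegral_mono (hQmeas x) fun y hy => ?_
      obtain ⟨hy1, hy2⟩ := hy
      have hdyz : ¬ dist y z ≤ δ := fun h => hy2 (mem_closedBall.mpr h)
      rw [not_le] at hdyz
      have hxy0 : 0 < ‖x - y‖ := by
        rw [norm_pos_iff, sub_ne_zero]
        intro h
        rw [h] at hxz
        exact absurd hxz (not_lt.2 hdyz.le)
      have hxy2 : ‖x - y‖ ≤ 2 * ‖z - y‖ := by
        have e1 : ‖z - y‖ = dist y z := by rw [dist_comm, dist_eq_norm]
        have e2 : ‖x - y‖ = dist x y := (dist_eq_norm x y).symm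
        have e3 : dist x y ≤ dist x z + dist z y := dist_triangle _ _ _
        have e4 : dist z y = dist y z := dist_comm z y
        linarith
      have hker : c2 * ENNReal.ofReal (‖z - y‖ ^ (α-(n:ℝ))) ≤
          ENNReal.ofReal (‖x - y‖ ^ (α - (n:ℝ))) := by
        rw [hc2, ← ENNReal.ofReal_mul (Real.rpow_nonneg two_pos.le _),
          ← Real.mul_rpow two_pos.le (norm_nonneg _)]
        exact ENNReal.ofReal_le_ofReal (kmono hxy0 hxy2)
      calc c2 * Q z y = v y * (c2 * ENNReal.ofReal (‖z - y‖ ^ (α-(n:ℝ)))) := by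
            rw [hQ]; ring
        _ ≤ v y * ENNReal.ofReal (‖x - y‖ ^ (α - (n:ℝ))) := mul_le_mul_right hker _
        _ = Q x y := rfl
    -- Tonelli: a.e. finiteness of x ↦ ν x (ball x r) near z
    set g : (EuclideanSpace ℝ (Fin n)) × (EuclideanSpace ℝ (Fin n)) → ℝ≥0∞ :=
      fun w => Set.indicator {w : (EuclideanSpace ℝ (Fin n)) × (EuclideanSpace ℝ (Fin n)) |
          dist w.2 w.1 < r}
        (fun w => v w.2 * ENNReal.ofReal (‖w.1 - w.2‖ ^ (α - (n:ℝ)))) w with hg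
    have hgmeas : Measurable g := by
      refine Measurable.indicator ?_ ?_
      · exact (hv_meas.comp measurable_snd).mul
          (((measurable_fst.sub measurable_snd).norm.pow measurable_const).ennreal_ofReal)
      · exact measurableSet_lt (measurable_snd.dist measurable_fst) measurable_const
    have hgball : ∀ x : EuclideanSpace ℝ (Fin n), ν x (ball x r) = ∫⁻ y, g (x, y) := by
      intro x
      rw [hνap x measurableSet_ball, ← lintegral_indicator measurableSet_ball]
      refine lintegral_congr fun y => ?_
      simp only [hg, Set.indicator_apply, Set.mem_setOf_eq, mem_ball, hQ]
    have hκ := kernel_lintegral_lt_top n α hα0 hαn hr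
    set κ : ℝ≥0∞ := ∫⁻ w in ball (0 : EuclideanSpace ℝ (Fin n)) r,
      ENNReal.ofReal (‖w‖ ^ (α - (n:ℝ))) with hκdef
    have htrans : ∀ y : EuclideanSpace ℝ (Fin n),
        ∫⁻ x in ball y r, ENNReal.ofReal (‖x - y‖ ^ (α-(n:ℝ))) = κ := by
      intro y
      rw [hκdef, ← lintegral_indicator measurableSet_ball, ← lintegral_indicator measurableSet_ball]
      have key : ∀ x : EuclideanSpace ℝ (Fin n),
          (ball y r).indicator (fun x => ENNReal.ofReal (‖x - y‖ ^ (α-(n:ℝ)))) x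
          = (ball (0 : EuclideanSpace ℝ (Fin n)) r).indicator
              (fun w => ENNReal.ofReal (‖w‖ ^ (α-(n:ℝ)))) (x + -y) := by
        intro x
        have hiff : x + -y ∈ ball (0 : EuclideanSpace ℝ (Fin n)) r ↔ x ∈ ball y r := by
          rw [mem_ball_zero_iff, ← sub_eq_add_neg, mem_ball, dist_eq_norm]
        by_cases hx : x ∈ ball y r
        · rw [Set.indicator_of_mem hx, Set.indicator_of_mem (hiff.2 hx), ← sub_eq_add_neg]
        · rw [Set.indicator_of_notMem hx, Set.indicator_of_notMem (fun h => hx (hiff.1 h))]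
      calc ∫⁻ x, (ball y r).indicator (fun x => ENNReal.ofReal (‖x - y‖ ^ (α-(n:ℝ)))) x
          = ∫⁻ x, (ball (0 : EuclideanSpace ℝ (Fin n)) r).indicator
              (fun w => ENNReal.ofReal (‖w‖ ^ (α-(n:ℝ)))) (x + -y) := lintegral_congr key
        _ = _ := lintegral_add_right_eq_self _ (-y)
    have hTon : ∫⁻ x in ball z δ, ν x (ball x r) < ⊤ := by
      have h1 : ∫⁻ x in ball z δ, ν x (ball x r) = ∫⁻ x in ball z δ, ∫⁻ y, g (x,y) :=
        lintegral_congr fun x => hgball x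
      rw [h1, lintegral_lintegral_swap hgmeas.aemeasurable]
      calc ∫⁻ y, ∫⁻ x in ball z δ, g (x, y)
          ≤ ∫⁻ y, (ball z (δ + r)).indicator (fun y' => v y' * κ) y := by
            refine lintegral_mono fun y => ?_
            by_cases hy : y ∈ ball z (δ + r)
            · rw [Set.indicator_of_mem hy]
              have hple : ∀ x, g (x, y) ≤ (ball y r).indicator
                  (fun x => v y * ENNReal.ofReal (‖x - y‖ ^ (α-(n:ℝ)))) x := by
                intro x
                by_cases hxy : dist y x < r
                · simp only [hg]
                  rw [Set.indicator_of_mem (show (x,y) ∈ {w :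
                      (EuclideanSpace ℝ (Fin n)) × (EuclideanSpace ℝ (Fin n)) |
                      dist w.2 w.1 < r} from hxy)]
                  rw [Set.indicator_of_mem (by rw [mem_ball, dist_comm]; exact hxy)]
                · simp only [hg]
                  rw [Set.indicator_of_notMem (show (x,y) ∉ {w :
                      (EuclideanSpace ℝ (Fin n)) × (EuclideanSpace ℝ (Fin n)) |
                      dist w.2 w.1 < r} from hxy)]
                  exact zero_le
              calc ∫⁻ x in ball z δ, g (x,y) ≤ ∫⁻ x, g (x,y) :=
                    setLIntegral_le_lintegral _ _
                _ ≤ ∫⁻ x, (ball y r).indicator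
                    (fun x => v y * ENNReal.ofReal (‖x - y‖ ^ (α-(n:ℝ)))) x :=
                    lintegral_mono hple
                _ = ∫⁻ x in ball y r, v y * ENNReal.ofReal (‖x - y‖ ^ (α-(n:ℝ))) :=
                    lintegral_indicator measurableSet_ball _
                _ = v y * ∫⁻ x in ball y r, ENNReal.ofReal (‖x - y‖ ^ (α-(n:ℝ))) :=
                    lintegral_const_mul _ (((measurable_id.sub
                      measurable_const).norm.pow measurable_const).ennreal_ofReal)
                _ = v y * κ := by rw [htrans y]
            · rw [Set.indicator_of_notMem hy]
              have hzero : ∀ x ∈ ball z δ, g (x,y) = 0 := by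
                intro x hx
                simp only [hg]
                refine Set.indicator_of_notMem ?_ _
                simp only [Set.mem_setOf_eq, not_lt]
                have h2 : δ + r ≤ dist y z := not_lt.1 (fun h => hy (mem_ball.mpr h))
                have h3 : dist x z < δ := mem_ball.mp hx
                have h4 := dist_triangle y x z
                linarith
              have hz0 : ∫⁻ x in ball z δ, g (x,y) = 0 := by
                rw [setLIntegral_congr_fun measurableSet_ball hzero]
                simp
              exact hz0.le
        _ = (∫⁻ y in ball z (δ + r), v y) * κ := by
            rw [lintegral_indicator measurableSet_ball, lintegral_mul_const _ hv_meas]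
        _ < ⊤ := ENNReal.mul_lt_top
            ((lintegral_mono_set ball_subset_closedBall).trans_lt (hvfin z (δ+r))) hκ
    have hmeasx : Measurable fun x : EuclideanSpace ℝ (Fin n) => ν x (ball x r) := by
      have h1 : (fun x : EuclideanSpace ℝ (Fin n) => ν x (ball x r))
          = fun x => ∫⁻ y, g (x, y) := funext hgball
      rw [h1]
      exact Measurable.lintegral_prod_right (f := fun x y => g (x, y)) hgmeas
    have hfinae : ∀ᵐ x ∂(volume.restrict (ball z δ)), ν x (ball x r) < ⊤ :=
      ae_lt_top hmeasx hTon.ne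
    haveI : (ae (volume.restrict (ball z δ))).NeBot := by
      refine ae_neBot.2 fun h0 => ?_
      rw [Measure.restrict_eq_zero] at h0
      exact absurd h0 (measure_ball_pos volume z hδ0).ne'
    obtain ⟨x, hx1, hx2⟩ := (hfinae.and (ae_restrict_mem measurableSet_ball)).exists
    have hlt : ENNReal.ofReal ((M₀+1)^(p:ℝ)) < ν x (ball x r) := by
      have h2 : c2 * ENNReal.ofReal Breal = ENNReal.ofReal ((M₀+1)^(p:ℝ)) := by
        rw [hc2, ← ENNReal.ofReal_mul (Real.rpow_nonneg two_pos.le _), hBreal]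
        congr 1
        rw [← mul_assoc, ← Real.rpow_add two_pos]
        have he0 : α - (n:ℝ) + ((n:ℝ) - α) = 0 := by ring
        rw [he0, Real.rpow_zero, one_mul]
      calc ENNReal.ofReal ((M₀+1)^(p:ℝ)) = c2 * ENNReal.ofReal Breal := h2.symm
        _ < c2 * ν z (S k) := (ENNReal.mul_lt_mul_iff_right hc2pos hc2top).2 hk
        _ ≤ ν x (ball x r) := hlow x hx2
    have hle2 : (M₀+1)^(p:ℝ) ≤ (ν x (ball x r)).toReal :=
      (ENNReal.ofReal_le_iff_le_toReal hx1.ne).1 hlt.le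
    have hM1 : 0 ≤ M₀ + 1 := by
      have : (0:ℝ) ≤ M₀ := le_max_right M 0
      linarith
    have h4 : ((M₀+1)^(p:ℝ))^(1/p:ℝ) ≤
        (∫ y in ball x r, |V y| ^ p / ‖x - y‖ ^ ((n:ℝ) - α)) ^ (1/p) := by
      refine Real.rpow_le_rpow (Real.rpow_nonneg hM1 _) ?_ (one_div_nonneg.2 hp0.le)
      rw [hIv x r]
      exact hle2
    rw [hqpow _ hM1] at h4
    have h5 := hMb x
    have h6 : M ≤ M₀ := le_max_left M 0
    linarith
end

section
/- Let 0 < α < n, 1 < p < n/α. Define V₁(y) = |y|^{−α} on ℝⁿ \ {0}. Then V₁ belongs to the classical Morrey space L^{p, n−αp}(ℝⁿ), i.e. sup_{x∈ℝⁿ, r>0} r^{−(n−αp)} ∫_{|x−y|<r} |y|^{−αp} dy < ∞, but V₁ ∉ S̃_{α,p}, i.e. there exists r > 0 with sup_{x∈ℝⁿ} ∫_{|x−y|<r} |y|^{−αp}/|x−y|^{n−α} dy = ∞. -/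
open MeasureTheory Metric

section StummelAux

open Set

lemma euclidean_nontrivial (n : ℕ) (hn : 0 < n) : Nontrivial (EuclideanSpace ℝ (Fin n)) := by
  refine ⟨⟨EuclideanSpace.single ⟨0, hn⟩ 1, 0, fun h => (one_ne_zero : (1:ℝ) ≠ 0) ?_⟩⟩
  have := congrArg (fun v => v ⟨0, hn⟩) h
  simpa [EuclideanSpace.single_apply, Pi.zero_apply] using this

lemma rpow_identity_upper (R : ℝ) (hR : 0 < R) (β : ℝ) (n k : ℕ) :
    (R / 2 ^ (k+1)) ^ (-β) * (R / 2 ^ k) ^ n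
      = R ^ ((n:ℝ) - β) * (2:ℝ) ^ β * ((2:ℝ) ^ (β - (n:ℝ))) ^ k := by
  have h1 : (0:ℝ) < R / 2 ^ (k+1) := by positivity
  have h2 : (0:ℝ) < R / 2 ^ k := by positivity
  have hL : (0:ℝ) < (R / 2 ^ (k+1)) ^ (-β) * (R / 2 ^ k) ^ n := by positivity
  have hRt : (0:ℝ) < R ^ ((n:ℝ) - β) * (2:ℝ) ^ β * ((2:ℝ) ^ (β - (n:ℝ))) ^ k := by positivity
  apply Real.log_injOn_pos (mem_Ioi.2 hL) (mem_Ioi.2 hRt)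
  rw [Real.log_mul (by positivity) (by positivity), Real.log_rpow h1, Real.log_pow,
    Real.log_div hR.ne' (by positivity), Real.log_div hR.ne' (by positivity),
    Real.log_pow, Real.log_pow, Real.log_mul (by positivity) (by positivity),
    Real.log_mul (by positivity) (by positivity), Real.log_rpow hR,
    Real.log_rpow (by norm_num : (0:ℝ) < 2), Real.log_pow,
    Real.log_rpow (by norm_num : (0:ℝ) < 2)]
  push_cast
  ring

lemma rpow_identity_lower (γ : ℝ) (n k : ℕ) :
    (((2:ℝ) ^ k)⁻¹) ^ (-γ) * ((((2:ℝ) ^ k)⁻¹) ^ n - (((2:ℝ) ^ (k+1))⁻¹) ^ n)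
      = ((2:ℝ) ^ (γ - (n:ℝ))) ^ k * (1 - (2:ℝ) ^ (-(n:ℝ))) := by
  have h2 : (0:ℝ) < 2 := by norm_num
  have e1 : (((2:ℝ) ^ k)⁻¹) ^ (-γ) * (((2:ℝ) ^ k)⁻¹) ^ n = ((2:ℝ) ^ (γ - (n:ℝ))) ^ k := by
    have hL : (0:ℝ) < (((2:ℝ) ^ k)⁻¹) ^ (-γ) * (((2:ℝ) ^ k)⁻¹) ^ n := by positivity
    have hR : (0:ℝ) < ((2:ℝ) ^ (γ - (n:ℝ))) ^ k := by positivity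
    apply Real.log_injOn_pos (mem_Ioi.2 hL) (mem_Ioi.2 hR)
    rw [Real.log_mul (by positivity) (by positivity), Real.log_rpow (by positivity)]
    simp only [Real.log_pow, Real.log_inv, Real.log_rpow h2]
    push_cast; ring
  have e2 : (((2:ℝ) ^ k)⁻¹) ^ (-γ) * (((2:ℝ) ^ (k+1))⁻¹) ^ n
      = ((2:ℝ) ^ (γ - (n:ℝ))) ^ k * (2:ℝ) ^ (-(n:ℝ)) := by
    have hL : (0:ℝ) < (((2:ℝ) ^ k)⁻¹) ^ (-γ) * (((2:ℝ) ^ (k+1))⁻¹) ^ n := by positivity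
    have hR : (0:ℝ) < ((2:ℝ) ^ (γ - (n:ℝ))) ^ k * (2:ℝ) ^ (-(n:ℝ)) := by positivity
    apply Real.log_injOn_pos (mem_Ioi.2 hL) (mem_Ioi.2 hR)
    rw [Real.log_mul (by positivity) (by positivity), Real.log_rpow (by positivity),
      Real.log_mul (by positivity) (by positivity)]
    simp only [Real.log_pow, Real.log_inv, Real.log_rpow h2]
    push_cast; ring
  rw [mul_sub, e1, e2, mul_sub, mul_one]

lemma norm_rpow_measurable (n : ℕ) (γ : ℝ) (hγ : 0 < γ) :
    Measurable fun y : EuclideanSpace ℝ (Fin n) => ENNReal.ofReal (‖y‖ ^ (-γ)) := by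
  have h1 : Measurable fun y : EuclideanSpace ℝ (Fin n) => (‖y‖ ^ γ)⁻¹ :=
    (((Real.continuous_rpow_const hγ.le).comp continuous_norm).measurable).inv
  have h2 : (fun y : EuclideanSpace ℝ (Fin n) => ‖y‖ ^ (-γ)) = fun y => (‖y‖ ^ γ)⁻¹ :=
    funext fun y => Real.rpow_neg (norm_nonneg y) γ
  exact ENNReal.measurable_ofReal.comp (h2 ▸ h1)

lemma norm_rpow_measurable_real (n : ℕ) (γ : ℝ) (hγ : 0 < γ) :
    Measurable fun y : EuclideanSpace ℝ (Fin n) => ‖y‖ ^ (-γ) := by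
  have h1 : Measurable fun y : EuclideanSpace ℝ (Fin n) => (‖y‖ ^ γ)⁻¹ :=
    (((Real.continuous_rpow_const hγ.le).comp continuous_norm).measurable).inv
  have h2 : (fun y : EuclideanSpace ℝ (Fin n) => ‖y‖ ^ (-γ)) = fun y => (‖y‖ ^ γ)⁻¹ :=
    funext fun y => Real.rpow_neg (norm_nonneg y) γ
  exact h2 ▸ h1

lemma aux_upper (n : ℕ) (hn : 0 < n) (β : ℝ) (hβ0 : 0 < β) (hβn : β < n) :
    ∃ C : ENNReal, C ≠ ⊤ ∧ ∀ R : ℝ, 0 < R →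
      ∫⁻ y in ball (0 : EuclideanSpace ℝ (Fin n)) R, ENNReal.ofReal (‖y‖ ^ (-β))
        ≤ ENNReal.ofReal (R ^ ((n:ℝ) - β)) * C := by
  set E := EuclideanSpace ℝ (Fin n) with hE
  haveI : Nontrivial E := euclidean_nontrivial n hn
  set μ : Measure E := volume
  set μ₁ := μ (ball (0:E) 1) with hμ₁
  have hμ₁top : μ₁ < ⊤ := measure_ball_lt_top
  have hfin : Module.finrank ℝ E = n := finrank_euclideanSpace_fin
  set q : ENNReal := ENNReal.ofReal ((2:ℝ) ^ (β - (n:ℝ))) with hq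
  have hqlt : q < 1 := by
    rw [hq, ← ENNReal.ofReal_one]
    apply ENNReal.ofReal_lt_ofReal_iff_of_nonneg (by positivity) |>.2
    exact Real.rpow_lt_one_of_one_lt_of_neg one_lt_two (by linarith)
  set S : ENNReal := ∑' k : ℕ, q ^ k with hS
  have hStop : S ≠ ⊤ := by
    rw [hS, ENNReal.tsum_geometric]
    simp [ENNReal.inv_ne_top, tsub_eq_zero_iff_le, not_le, hqlt]
  refine ⟨ENNReal.ofReal ((2:ℝ) ^ β) * μ₁ * S, ?_, ?_⟩
  · exact ENNReal.mul_ne_top (ENNReal.mul_ne_top ENNReal.ofReal_ne_top hμ₁top.ne) hStop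
  intro R hR
  set ρ : ℕ → ℝ := fun k => R / 2 ^ k with hρ
  have hρpos : ∀ k, 0 < ρ k := fun k => by positivity
  set B : ℕ → Set E := fun k => ball (0:E) (ρ k) \ ball 0 (ρ (k+1)) with hB
  have hmeas := norm_rpow_measurable n β hβ0
  -- covering
  have hcover : ball (0:E) R ⊆ {0} ∪ ⋃ k, B k := by
    intro y hy
    rcases eq_or_ne y 0 with rfl | hy0
    · exact Or.inl rfl
    refine Or.inr ?_
    have ht0 : 0 < ‖y‖ := norm_pos_iff.2 hy0
    have htR : ‖y‖ < R := mem_ball_zero_iff.1 hy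
    obtain ⟨m, hm⟩ := exists_mem_Ico_zpow (x := ‖y‖ / R) (y := (2:ℝ))
      (by positivity) one_lt_two
    have hm1 : (2:ℝ) ^ m < 2 ^ (0:ℤ) := by
      calc (2:ℝ) ^ m ≤ ‖y‖ / R := hm.1
        _ < 1 := (div_lt_one hR).2 htR
        _ = 2 ^ (0:ℤ) := by norm_num
    have hmneg : m < 0 := (zpow_lt_zpow_iff_right₀ one_lt_two).1 hm1
    set k : ℕ := (-(m+1)).toNat with hk
    have hkm : (k : ℤ) = -(m+1) := Int.toNat_of_nonneg (by omega)
    have hmk : m = -((k:ℤ)+1) := by omega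
    have e1 : (2:ℝ) ^ m = ((2:ℝ) ^ (k+1 : ℕ))⁻¹ := by
      rw [hmk, zpow_neg, ← zpow_natCast (2:ℝ) (k+1)]
      push_cast
      ring_nf
    have e2 : (2:ℝ) ^ (m+1) = ((2:ℝ) ^ (k : ℕ))⁻¹ := by
      have : m + 1 = -(k:ℤ) := by omega
      rw [this, zpow_neg, ← zpow_natCast (2:ℝ) k]
    refine mem_iUnion.2 ⟨k, ?_, ?_⟩
    · -- ‖y‖ < ρ k
      rw [mem_ball_zero_iff, hρ]
      have := hm.2
      rw [e2] at this
      rw [div_lt_iff₀ hR] at this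
      calc ‖y‖ = (‖y‖ / R) * R := by field_simp
        _ < ((2:ℝ) ^ (k:ℕ))⁻¹ * R := by
            apply mul_lt_mul_of_pos_right _ hR
            rw [← e2]; exact hm.2
        _ = R / 2 ^ k := by ring
    · -- ¬ ‖y‖ < ρ (k+1)
      rw [mem_ball_zero_iff, hρ, not_lt]
      have h1 : ((2:ℝ) ^ (k+1:ℕ))⁻¹ ≤ ‖y‖ / R := by rw [← e1]; exact hm.1
      calc R / 2 ^ (k+1) = ((2:ℝ) ^ (k+1:ℕ))⁻¹ * R := by ring
        _ ≤ (‖y‖ / R) * R := mul_le_mul_of_nonneg_right h1 hR.le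
        _ = ‖y‖ := by field_simp
  -- per-annulus bound
  have hterm : ∀ k, ∫⁻ y in B k, ENNReal.ofReal (‖y‖ ^ (-β)) ∂μ
      ≤ (ENNReal.ofReal (R ^ ((n:ℝ) - β)) * (ENNReal.ofReal ((2:ℝ) ^ β) * μ₁)) * q ^ k := by
    intro k
    have hconst : ∀ y ∈ B k, ENNReal.ofReal (‖y‖ ^ (-β)) ≤ ENNReal.ofReal (ρ (k+1) ^ (-β)) := by
      intro y hy
      apply ENNReal.ofReal_le_ofReal
      have hy2 : ρ (k+1) ≤ ‖y‖ := by
        by_contra h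
        exact hy.2 (mem_ball_zero_iff.2 (lt_of_not_ge h))
      exact Real.rpow_le_rpow_of_nonpos (hρpos (k+1)) hy2 (neg_nonpos.2 hβ0.le)
    calc ∫⁻ y in B k, ENNReal.ofReal (‖y‖ ^ (-β)) ∂μ
        ≤ ∫⁻ _ in B k, ENNReal.ofReal (ρ (k+1) ^ (-β)) ∂μ :=
          setLIntegral_mono measurable_const hconst
      _ = ENNReal.ofReal (ρ (k+1) ^ (-β)) * μ (B k) := setLIntegral_const _ _
      _ ≤ ENNReal.ofReal (ρ (k+1) ^ (-β)) * μ (ball (0:E) (ρ k)) :=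
          mul_le_mul_right (measure_mono diff_subset) _
      _ = ENNReal.ofReal (ρ (k+1) ^ (-β)) * (ENNReal.ofReal (ρ k ^ n) * μ₁) := by
          rw [Measure.addHaar_ball μ 0 (hρpos k).le, hfin]
      _ = ENNReal.ofReal (ρ (k+1) ^ (-β) * ρ k ^ n) * μ₁ := by
          rw [← mul_assoc, ← ENNReal.ofReal_mul (by positivity)]
      _ = (ENNReal.ofReal (R ^ ((n:ℝ) - β)) * (ENNReal.ofReal ((2:ℝ) ^ β) * μ₁)) * q ^ k := by
          rw [hρ, rpow_identity_upper R hR β n k, ENNReal.ofReal_mul (by positivity),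
            ENNReal.ofReal_mul (by positivity), hq, ← ENNReal.ofReal_pow (by positivity)]
          ring
  -- assemble
  calc ∫⁻ y in ball (0:E) R, ENNReal.ofReal (‖y‖ ^ (-β)) ∂μ
      ≤ ∫⁻ y in ({0} ∪ ⋃ k, B k : Set E), ENNReal.ofReal (‖y‖ ^ (-β)) ∂μ :=
        lintegral_mono_set hcover
    _ ≤ (∫⁻ y in ({0} : Set E), ENNReal.ofReal (‖y‖ ^ (-β)) ∂μ)
        + ∫⁻ y in ⋃ k, B k, ENNReal.ofReal (‖y‖ ^ (-β)) ∂μ := lintegral_union_le _ _ _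
    _ = ∫⁻ y in ⋃ k, B k, ENNReal.ofReal (‖y‖ ^ (-β)) ∂μ := by
        rw [lintegral_singleton]
        simp [Real.zero_rpow (neg_ne_zero.2 hβ0.ne')]
    _ ≤ ∑' k, ∫⁻ y in B k, ENNReal.ofReal (‖y‖ ^ (-β)) ∂μ := lintegral_iUnion_le _ _
    _ ≤ ∑' k, (ENNReal.ofReal (R ^ ((n:ℝ) - β)) * (ENNReal.ofReal ((2:ℝ) ^ β) * μ₁)) * q ^ k :=
        ENNReal.tsum_le_tsum hterm
    _ = (ENNReal.ofReal (R ^ ((n:ℝ) - β)) * (ENNReal.ofReal ((2:ℝ) ^ β) * μ₁)) * S := by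
        rw [ENNReal.tsum_mul_left, hS]
    _ = ENNReal.ofReal (R ^ ((n:ℝ) - β)) * (ENNReal.ofReal ((2:ℝ) ^ β) * μ₁ * S) := by ring

lemma aux_lower (n : ℕ) (hn : 0 < n) (γ : ℝ) (hγpos : 0 < γ) (hγ : (n:ℝ) ≤ γ) :
    ∫⁻ y in ball (0 : EuclideanSpace ℝ (Fin n)) 1,
      ENNReal.ofReal (‖y‖ ^ (-γ)) = ⊤ := by
  set E := EuclideanSpace ℝ (Fin n)
  haveI : Nontrivial E := euclidean_nontrivial n hn
  set μ : Measure E := volume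
  set a : ℕ → ℝ := fun k => ((2:ℝ) ^ k)⁻¹ with ha
  have hapos : ∀ k, 0 < a k := fun k => by positivity
  have hamono : ∀ {i j : ℕ}, i ≤ j → a j ≤ a i := by
    intro i j hij
    exact inv_anti₀ (by positivity) (pow_le_pow_right₀ one_le_two hij)
  set A : ℕ → Set E := fun k => ball (0:E) (a k) \ ball 0 (a (k+1)) with hA
  have hmeasA : ∀ k, MeasurableSet (A k) := fun k =>
    measurableSet_ball.diff measurableSet_ball
  have hdisj : Pairwise (Function.onFun Disjoint A) := by
    have key : ∀ i j : ℕ, i < j → Disjoint (A i) (A j) := by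
      intro i j hij
      refine Set.disjoint_left.2 fun y hyi hyj => ?_
      have h1 : ¬ y ∈ ball (0:E) (a (i+1)) := hyi.2
      have h2 : y ∈ ball (0:E) (a j) := hyj.1
      exact h1 (ball_subset_ball (hamono hij) h2)
    intro i j hij
    rcases hij.lt_or_gt with h | h
    · exact key i j h
    · exact (key j i h).symm
  have hmeas : Measurable fun y : E => ENNReal.ofReal (‖y‖ ^ (-γ)) := by
    have h1 : Measurable fun y : E => (‖y‖ ^ γ)⁻¹ :=
      (((Real.continuous_rpow_const hγpos.le).comp continuous_norm).measurable).inv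
    have h2 : (fun y : E => ‖y‖ ^ (-γ)) = fun y => (‖y‖ ^ γ)⁻¹ :=
      funext fun y => Real.rpow_neg (norm_nonneg y) γ
    exact ENNReal.measurable_ofReal.comp (h2 ▸ h1)
  -- union contained in unit ball
  have hsub : (⋃ k, A k) ⊆ ball (0:E) 1 := by
    refine iUnion_subset fun k => ?_
    refine (diff_subset).trans (ball_subset_ball ?_)
    have := hamono (Nat.zero_le k)
    simpa [ha] using this
  set μ₁ := μ (ball (0:E) 1) with hμ₁
  have hμ₁pos : 0 < μ₁ := measure_ball_pos μ 0 one_pos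
  have hμ₁top : μ₁ < ⊤ := measure_ball_lt_top
  have hfin : Module.finrank ℝ E = n := finrank_euclideanSpace_fin
  have hballmeas : ∀ k, μ (ball (0:E) (a k)) = ENNReal.ofReal (a k ^ n) * μ₁ := by
    intro k
    rw [Measure.addHaar_ball μ 0 (hapos k).le, hfin]
  set c₀ : ℝ := 1 - (2:ℝ) ^ (-(n:ℝ)) with hc₀
  have hc₀pos : 0 < c₀ := by
    have : (2:ℝ) ^ (-(n:ℝ)) < 1 := by
      apply Real.rpow_lt_one_of_one_lt_of_neg one_lt_two
      simpa using (show (0:ℝ) < n from Nat.cast_pos.2 hn)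
    linarith
  -- lower bound each annulus integral
  have hterm : ∀ k, ENNReal.ofReal c₀ * μ₁ ≤ ∫⁻ y in A k, ENNReal.ofReal (‖y‖ ^ (-γ)) ∂μ := by
    intro k
    have hconst : ∀ y ∈ A k, ENNReal.ofReal (a k ^ (-γ)) ≤ ENNReal.ofReal (‖y‖ ^ (-γ)) := by
      intro y hy
      apply ENNReal.ofReal_le_ofReal
      have hy1 : ‖y‖ < a k := mem_ball_zero_iff.1 hy.1
      have hy2 : a (k+1) ≤ ‖y‖ := by
        by_contra h
        exact hy.2 (mem_ball_zero_iff.2 (lt_of_not_ge h))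
      have hypos : 0 < ‖y‖ := lt_of_lt_of_le (hapos (k+1)) hy2
      exact Real.rpow_le_rpow_of_nonpos hypos hy1.le (neg_nonpos.2 hγpos.le)
    calc ENNReal.ofReal c₀ * μ₁
        ≤ ENNReal.ofReal (a k ^ (-γ)) * μ (A k) := by
          have hAk : μ (A k) = ENNReal.ofReal (a k ^ n - a (k+1) ^ n) * μ₁ := by
            rw [hA]
            rw [measure_diff (ball_subset_ball (hamono (Nat.le_succ k)))
              measurableSet_ball.nullMeasurableSet (measure_ball_lt_top).ne,
              hballmeas, hballmeas,
              ← ENNReal.sub_mul (fun _ _ => hμ₁top.ne),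
              ← ENNReal.ofReal_sub _ (by positivity)]
          rw [hAk, ← mul_assoc, ← ENNReal.ofReal_mul (by positivity)]
          apply mul_le_mul_left
          apply ENNReal.ofReal_le_ofReal
          rw [ha]
          rw [rpow_identity_lower γ n k]
          have h1 : (1:ℝ) ≤ ((2:ℝ) ^ (γ - (n:ℝ))) ^ k := by
            apply one_le_pow₀
            apply Real.one_le_rpow one_le_two (by linarith)
          nlinarith [hc₀pos]
      _ ≤ ∫⁻ y in A k, ENNReal.ofReal (‖y‖ ^ (-γ)) ∂μ := by
          rw [← setLIntegral_const (A k) (ENNReal.ofReal (a k ^ (-γ)))]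
          exact setLIntegral_mono hmeas hconst
  -- sum diverges
  have hsum : (∑' _ : ℕ, ENNReal.ofReal c₀ * μ₁) = ⊤ := by
    apply ENNReal.tsum_const_eq_top_of_ne_zero
    exact mul_ne_zero (by simpa using hc₀pos) hμ₁pos.ne'
  refine top_unique ?_
  calc (⊤ : ENNReal) = ∑' _ : ℕ, ENNReal.ofReal c₀ * μ₁ := hsum.symm
    _ ≤ ∑' k, ∫⁻ y in A k, ENNReal.ofReal (‖y‖ ^ (-γ)) ∂μ := ENNReal.tsum_le_tsum hterm
    _ = ∫⁻ y in ⋃ k, A k, ENNReal.ofReal (‖y‖ ^ (-γ)) ∂μ :=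
        (lintegral_iUnion hmeasA hdisj _).symm
    _ ≤ _ := lintegral_mono_set hsub

end StummelAux

section StummelMain

open Set

/-- V₁(y) = |y|^{−α} belongs to the classical Morrey space
L^{p, n−αp} but not to the bounded Stummel modulus class S̃_{α,p}
(its Stummel modulus is infinite for some r > 0). -/
theorem stmt_18 (n : ℕ) (α p : ℝ) (hα0 : 0 < α) (hαn : α < n)
    (hp1 : 1 < p) (hpn : p < (n : ℝ) / α) :
    (∃ C : ℝ, 0 < C ∧ ∀ (x : EuclideanSpace ℝ (Fin n)) (r : ℝ), 0 < r →
        r ^ (-((n : ℝ) - α * p)) * ∫ y in ball x r, ‖y‖ ^ (-(α * p)) ≤ C) ∧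
    (∃ r : ℝ, 0 < r ∧
      (⨆ x : EuclideanSpace ℝ (Fin n),
        ∫⁻ y in ball x r,
          ENNReal.ofReal (‖y‖ ^ (-(α * p)) / ‖x - y‖ ^ ((n : ℝ) - α))) = ⊤) := by
  have hn0 : (0:ℝ) < n := lt_trans hα0 hαn
  have hn : 0 < n := by exact_mod_cast hn0
  set β := α * p with hβ
  have hp0 : 0 < p := lt_trans one_pos hp1
  have hβ0 : 0 < β := mul_pos hα0 hp0
  have hβn : β < n := by
    have := (lt_div_iff₀ hα0).1 hpn
    nlinarith
  obtain ⟨C₀, hC₀top, hC₀⟩ := aux_upper n hn β hβ0 hβn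
  haveI : Nontrivial (EuclideanSpace ℝ (Fin n)) := euclidean_nontrivial n hn
  have hfin : Module.finrank ℝ (EuclideanSpace ℝ (Fin n)) = n := finrank_euclideanSpace_fin
  constructor
  · -- Morrey part
    set μ₁ := volume (ball (0:EuclideanSpace ℝ (Fin n)) 1) with hμ₁
    have hμ₁top : μ₁ < ⊤ := measure_ball_lt_top
    set Ctop : ENNReal := μ₁ + ENNReal.ofReal ((3:ℝ) ^ ((n:ℝ) - β)) * C₀ with hCtop
    have hCtopne : Ctop ≠ ⊤ :=
      ENNReal.add_ne_top.2 ⟨hμ₁top.ne, ENNReal.mul_ne_top ENNReal.ofReal_ne_top hC₀top⟩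
    refine ⟨Ctop.toReal + 1, by positivity, ?_⟩
    intro x r hr
    have hI : ∫⁻ y in ball x r, ENNReal.ofReal (‖y‖ ^ (-β))
        ≤ ENNReal.ofReal (r ^ ((n:ℝ) - β)) * Ctop := by
      rcases le_or_gt (‖x‖) (2*r) with hx | hx
      · have hsub : ball x r ⊆ ball (0:EuclideanSpace ℝ (Fin n)) (3*r) := by
          intro y hy
          rw [mem_ball_zero_iff]
          have h1 : ‖y - x‖ < r := by rw [← dist_eq_norm]; exact mem_ball.1 hy
          calc ‖y‖ = ‖(y - x) + x‖ := by rw [sub_add_cancel]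
            _ ≤ ‖y - x‖ + ‖x‖ := norm_add_le _ _
            _ < r + 2*r := by linarith
            _ = 3*r := by ring
        calc ∫⁻ y in ball x r, ENNReal.ofReal (‖y‖ ^ (-β))
            ≤ ∫⁻ y in ball (0:EuclideanSpace ℝ (Fin n)) (3*r), ENNReal.ofReal (‖y‖ ^ (-β)) :=
              lintegral_mono_set hsub
          _ ≤ ENNReal.ofReal ((3*r) ^ ((n:ℝ) - β)) * C₀ := hC₀ (3*r) (by positivity)
          _ = ENNReal.ofReal (r ^ ((n:ℝ) - β)) * (ENNReal.ofReal ((3:ℝ) ^ ((n:ℝ) - β)) * C₀) := by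
              rw [Real.mul_rpow (by norm_num) hr.le, ENNReal.ofReal_mul (by positivity)]
              ring
          _ ≤ ENNReal.ofReal (r ^ ((n:ℝ) - β)) * Ctop := by
              apply mul_le_mul_right
              rw [hCtop]
              exact le_add_self
      · have hconst : ∀ y ∈ ball x r,
            ENNReal.ofReal (‖y‖ ^ (-β)) ≤ ENNReal.ofReal (r ^ (-β)) := by
          intro y hy
          apply ENNReal.ofReal_le_ofReal
          have h1 : ‖x‖ - ‖y‖ ≤ ‖x - y‖ := norm_sub_norm_le _ _
          have h2 : ‖x - y‖ < r := by
            rw [← dist_eq_norm, dist_comm]; exact mem_ball.1 hy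
          have h3 : r ≤ ‖y‖ := by linarith
          exact Real.rpow_le_rpow_of_nonpos hr h3 (neg_nonpos.2 hβ0.le)
        calc ∫⁻ y in ball x r, ENNReal.ofReal (‖y‖ ^ (-β))
            ≤ ∫⁻ _ in ball x r, ENNReal.ofReal (r ^ (-β)) :=
              setLIntegral_mono measurable_const hconst
          _ = ENNReal.ofReal (r ^ (-β)) * volume (ball x r) := setLIntegral_const _ _
          _ = ENNReal.ofReal (r ^ (-β)) * (ENNReal.ofReal (r ^ n) * μ₁) := by
              rw [Measure.addHaar_ball volume x hr.le, hfin, hμ₁]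
          _ = ENNReal.ofReal (r ^ ((n:ℝ) - β)) * μ₁ := by
              rw [← mul_assoc, ← ENNReal.ofReal_mul (by positivity)]
              congr 2
              rw [← Real.rpow_natCast r n, ← Real.rpow_add hr]
              congr 1
              ring
          _ ≤ ENNReal.ofReal (r ^ ((n:ℝ) - β)) * Ctop := by
              apply mul_le_mul_right
              rw [hCtop]
              exact self_le_add_right _ _
    have hint : ∫ y in ball x r, ‖y‖ ^ (-β)
        = (∫⁻ y in ball x r, ENNReal.ofReal (‖y‖ ^ (-β))).toReal :=
      integral_eq_lintegral_of_nonneg_ae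
        (Filter.Eventually.of_forall fun y => Real.rpow_nonneg (norm_nonneg y) _)
        ((norm_rpow_measurable_real n β hβ0).aestronglyMeasurable)
    rw [hint]
    have h1 : (∫⁻ y in ball x r, ENNReal.ofReal (‖y‖ ^ (-β))).toReal
        ≤ r ^ ((n:ℝ) - β) * Ctop.toReal := by
      have := ENNReal.toReal_mono (ENNReal.mul_ne_top ENNReal.ofReal_ne_top hCtopne) hI
      rwa [ENNReal.toReal_mul, ENNReal.toReal_ofReal (by positivity)] at this
    calc r ^ (-((n:ℝ) - β)) * (∫⁻ y in ball x r, ENNReal.ofReal (‖y‖ ^ (-β))).toReal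
        ≤ r ^ (-((n:ℝ) - β)) * (r ^ ((n:ℝ) - β) * Ctop.toReal) :=
          mul_le_mul_of_nonneg_left h1 (Real.rpow_nonneg hr.le _)
      _ = Ctop.toReal := by
          rw [← mul_assoc, ← Real.rpow_add hr, neg_add_cancel, Real.rpow_zero, one_mul]
      _ ≤ Ctop.toReal + 1 := by linarith
  · -- Stummel part
    refine ⟨1, one_pos, ?_⟩
    apply top_unique
    refine le_trans ?_ (le_iSup _ (0 : EuclideanSpace ℝ (Fin n)))
    set γ := β + ((n:ℝ) - α) with hγ
    have hγpos : 0 < γ := by rw [hγ]; nlinarith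
    have hcongr : ∀ y : EuclideanSpace ℝ (Fin n),
        ‖y‖ ^ (-β) / ‖(0:EuclideanSpace ℝ (Fin n)) - y‖ ^ ((n:ℝ) - α) = ‖y‖ ^ (-γ) := by
      intro y
      rw [zero_sub, norm_neg]
      rcases eq_or_ne y 0 with rfl | hy
      · rw [norm_zero, Real.zero_rpow (neg_ne_zero.2 hβ0.ne'),
          Real.zero_rpow (neg_ne_zero.2 hγpos.ne'), zero_div]
      · have hpos : 0 < ‖y‖ := norm_pos_iff.2 hy
        rw [hγ, show -(β + ((n:ℝ) - α)) = -β - ((n:ℝ) - α) by ring, Real.rpow_sub hpos (-β) ((n:ℝ) - α)]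
    have : (∫⁻ y in ball (0:EuclideanSpace ℝ (Fin n)) 1,
        ENNReal.ofReal (‖y‖ ^ (-β) / ‖(0:EuclideanSpace ℝ (Fin n)) - y‖ ^ ((n:ℝ) - α)))
        = ∫⁻ y in ball (0:EuclideanSpace ℝ (Fin n)) 1, ENNReal.ofReal (‖y‖ ^ (-γ)) :=
      lintegral_congr fun y => by rw [hcongr]
    rw [this, aux_lower n hn γ hγpos (by rw [hγ]; nlinarith)]

end StummelMain
end
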